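/- Let p = (p_i)_{i∈ℕ} be a probability distribution on ℕ, X^n a sample of n i.i.d. observations from p with n ≥ 10, and p̂ the maximum likelihood estimator. Then P( sup over i with p_i < 1/n of (p̂_i(X^n) − p_i) ≥ log(n)/n ) ≤ 81/n. -/

import Mathlib

open MeasureTheory Real Filter
open scoped ENNReal

noncomputable def sampleMeasure (p : PMF ℕ) (n : ℕ) : Measure (Fin n → ℕ) :=
  MeasureTheory.Measure.pi fun _ => p.toMeasure

noncomputable def mle (n : ℕ) (x : Fin n → ℕ) (i : ℕ) : ℝ :=
  ((Finset.univ.filter fun j => x j = i).card : ℝ) / n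


/-- `8 ^ M ≤ 64 * (M+1)!` for every `M`. -/
lemma aux_fact_bound : ∀ M : ℕ, 8 ^ M ≤ 64 * Nat.factorial (M + 1) := by
  intro M
  induction M with
  | zero => norm_num
  | succ k ih =>
    rcases le_or_gt k 5 with h | h
    · interval_cases k <;> norm_num [Nat.factorial]
    · calc 8 ^ (k + 1) = 8 * 8 ^ k := by ring
        _ ≤ 8 * (64 * Nat.factorial (k + 1)) := Nat.mul_le_mul_left _ ih
        _ ≤ (k + 2) * (64 * Nat.factorial (k + 1)) := Nat.mul_le_mul_right _ (by omega)
        _ = 64 * Nat.factorial (k + 2) := by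
            rw [Nat.factorial_succ (k + 1)]; ring

lemma aux_exp_two_le : Real.exp 2 ≤ 8 := by
  have h1 : Real.exp 1 < 2.7182818286 := Real.exp_one_lt_d9
  have h0 : (0:ℝ) ≤ Real.exp 1 := (Real.exp_pos 1).le
  have h2 : Real.exp 2 = Real.exp 1 * Real.exp 1 := by
    rw [← Real.exp_add]; norm_num
  nlinarith

/-- The key tail bound: `t^(m-1) * e^(2L) ≤ 81 * m!` where `m = ⌈L + t⌉₊`. -/
lemma aux_key (L t : ℝ) (hL : 2 < L) (ht0 : 0 ≤ t) (ht1 : t < 1) :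
    t ^ (⌈L + t⌉₊ - 1) * Real.exp (2 * L) ≤ 81 * (Nat.factorial ⌈L + t⌉₊) := by
  set m := ⌈L + t⌉₊ with hm
  set M := ⌈L⌉₊ with hMdef
  have hL0 : (0:ℝ) ≤ L := by linarith
  have hM3 : 3 ≤ M := by
    have : (2:ℕ) < M := Nat.lt_ceil.mpr (by exact_mod_cast hL)
    omega
  have hLM : L ≤ (M:ℝ) := Nat.le_ceil L
  have hmM : M ≤ m := Nat.ceil_le_ceil (by linarith)
  have hexp2 : (0:ℝ) ≤ Real.exp 2 := (Real.exp_pos 2).le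
  rcases eq_or_lt_of_le hmM with hEq | hLt
  · -- m = M
    have hts : t ≤ (M:ℝ) - L := by
      have h1 : L + t ≤ (M:ℝ) := Nat.ceil_le.mp (le_of_eq hEq.symm)
      linarith
    set s : ℝ := (M:ℝ) - L with hs
    have hs0 : (0:ℝ) ≤ s := by linarith
    have hs1 : s < 1 := by
      have := Nat.ceil_lt_add_one hL0
      simp only [← hMdef] at this
      linarith
    have h1 : t ^ (m - 1) ≤ s ^ (m - 1) := pow_le_pow_left₀ ht0 hts _
    have h2 : s ^ (m - 1) ≤ s ^ 2 :=
      pow_le_pow_of_le_one hs0 hs1.le (by omega)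
    have h3 : s ≤ Real.exp (s - 1) := by
      have := Real.add_one_le_exp (s - 1); linarith
    have h4 : s ^ 2 ≤ Real.exp (s - 1) ^ 2 := pow_le_pow_left₀ hs0 h3 2
    have h5 : Real.exp (s - 1) ^ 2 * Real.exp (2 * L) = Real.exp ((M:ℝ) - 1) ^ 2 := by
      rw [← Real.exp_nat_mul, ← Real.exp_nat_mul, ← Real.exp_add]
      congr 1
      push_cast
      ring
    have h6 : Real.exp ((M:ℝ) - 1) ^ 2 = Real.exp 2 ^ (M - 1) := by
      rw [← Real.exp_nat_mul, ← Real.exp_nat_mul]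
      congr 1
      have : ((M - 1 : ℕ) : ℝ) = (M:ℝ) - 1 := by
        push_cast [Nat.cast_sub (by omega : 1 ≤ M)]; ring
      rw [this]; ring
    have h7 : Real.exp 2 ^ (M - 1) ≤ (8:ℝ) ^ (M - 1) :=
      pow_le_pow_left₀ hexp2 aux_exp_two_le _
    have h8 : (8:ℝ) ^ (M - 1) ≤ 64 * (Nat.factorial M) := by
      have := aux_fact_bound (M - 1)
      have hM1 : M - 1 + 1 = M := by omega
      rw [hM1] at this
      exact_mod_cast this
    have hexpL : (0:ℝ) ≤ Real.exp (2 * L) := (Real.exp_pos _).le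
    calc t ^ (m - 1) * Real.exp (2 * L)
        ≤ Real.exp (s - 1) ^ 2 * Real.exp (2 * L) := by
          apply mul_le_mul_of_nonneg_right _ hexpL
          exact h1.trans (h2.trans h4)
      _ = Real.exp ((M:ℝ) - 1) ^ 2 := h5
      _ ≤ 64 * (Nat.factorial M) := by rw [h6]; exact h7.trans h8
      _ ≤ 81 * (Nat.factorial m) := by
          rw [← hEq]
          have : (0:ℝ) ≤ (Nat.factorial M : ℝ) := by positivity
          linarith
  · -- M < m
    have h1 : t ^ (m - 1) ≤ 1 := pow_le_one₀ ht0 ht1.le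
    have h2 : Real.exp (2 * L) ≤ Real.exp 2 ^ M := by
      rw [← Real.exp_nat_mul]
      apply Real.exp_le_exp.mpr
      linarith
    have h3 : Real.exp 2 ^ M ≤ (8:ℝ) ^ M := pow_le_pow_left₀ hexp2 aux_exp_two_le _
    have h4 : (8:ℝ) ^ M ≤ 64 * (Nat.factorial (M + 1)) := by
      exact_mod_cast aux_fact_bound M
    have h5 : (Nat.factorial (M + 1) : ℝ) ≤ (Nat.factorial m : ℝ) := by
      exact_mod_cast Nat.factorial_le (by omega)
    have hexpL : (0:ℝ) < Real.exp (2 * L) := Real.exp_pos _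
    calc t ^ (m - 1) * Real.exp (2 * L) ≤ 1 * Real.exp (2 * L) := by
          apply mul_le_mul_of_nonneg_right h1 hexpL.le
      _ = Real.exp (2 * L) := one_mul _
      _ ≤ 64 * (Nat.factorial (M + 1)) := h2.trans (h3.trans h4)
      _ ≤ 81 * (Nat.factorial m) := by nlinarith [(Nat.cast_pos (α := ℝ)).mpr (Nat.factorial_pos m)]

/-- Key analytic inequality: `C(n,m) q^m ≤ (81/n) q` with `m = ⌈log n + n q⌉₊`. -/
lemma aux_core (n : ℕ) (hn : 10 ≤ n) (q : ℝ) (hq0 : 0 ≤ q) (hq : q < 1 / n) :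
    (n.choose ⌈Real.log n + n * q⌉₊ : ℝ) * q ^ ⌈Real.log n + n * q⌉₊ ≤ 81 / n * q := by
  have hn0 : (0:ℝ) < n := by
    have : (10:ℝ) ≤ n := by exact_mod_cast hn
    linarith
  set L := Real.log n with hLdef
  have hL : 2 < L := by
    rw [hLdef, lt_log_iff_exp_lt hn0]
    have : (10:ℝ) ≤ n := by exact_mod_cast hn
    linarith [aux_exp_two_le]
  set m := ⌈L + n * q⌉₊ with hm
  have ht0 : (0:ℝ) ≤ n * q := by positivity
  have ht1 : n * q < 1 := by
    have := (lt_div_iff₀ hn0).mp hq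
    linarith [mul_comm q (n:ℝ)]
  have hm1 : 1 ≤ m := by
    rw [hm]
    exact Nat.one_le_iff_ne_zero.mpr (by
      have : 0 < ⌈L + n * q⌉₊ := Nat.ceil_pos.mpr (by linarith)
      omega)
  clear_value m
  rcases eq_or_lt_of_le hq0 with h0 | hq0'
  · rw [← h0]
    rw [zero_pow (by omega : m ≠ 0)]
    simp
  -- q > 0
  have key := aux_key L (n * q) hL ht0 ht1
  rw [← hm] at key
  have hfac : (0:ℝ) < (Nat.factorial m : ℝ) := by exact_mod_cast Nat.factorial_pos m
  have hchoose : (n.choose m : ℝ) * (Nat.factorial m : ℝ) ≤ (n:ℝ) ^ m := by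
    have h := Nat.descFactorial_le_pow n m
    have h2 : Nat.factorial m * n.choose m = n.descFactorial m := 
      (Nat.descFactorial_eq_factorial_mul_choose n m).symm
    calc (n.choose m : ℝ) * (Nat.factorial m : ℝ) 
        = ((Nat.factorial m * n.choose m : ℕ) : ℝ) := by push_cast; ring
      _ = ((n.descFactorial m : ℕ) : ℝ) := by rw [h2]
      _ ≤ (n:ℝ) ^ m := by exact_mod_cast h
  have hexpL : Real.exp (2 * L) = (n:ℝ) * (n:ℝ) := by
    rw [two_mul, Real.exp_add, hLdef, Real.exp_log hn0]
  -- reduce: suffices choose * q^(m-1) ≤ 81 / n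
  obtain ⟨k, rfl⟩ : ∃ k, m = k + 1 := ⟨m - 1, by omega⟩
  have hsplit : q ^ (k + 1) = q ^ k * q := by ring
  rw [hsplit, ← mul_assoc]
  apply mul_le_mul_of_nonneg_right _ hq0
  -- show (choose (k+1)) * q^k ≤ 81 / n
  rw [le_div_iff₀ hn0]
  rw [← mul_le_mul_iff_of_pos_right hfac]
  have hkm : (k + 1) - 1 = k := by omega
  rw [hkm] at key
  calc (n.choose (k + 1) : ℝ) * q ^ k * (n:ℝ) * (Nat.factorial (k + 1) : ℝ)
      = ((n.choose (k + 1) : ℝ) * (Nat.factorial (k + 1) : ℝ)) * (q ^ k * (n:ℝ)) := by ring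
    _ ≤ (n:ℝ) ^ (k + 1) * (q ^ k * (n:ℝ)) := by
        apply mul_le_mul_of_nonneg_right hchoose (by positivity)
    _ = ((n:ℝ) * q) ^ k * ((n:ℝ) * (n:ℝ)) := by rw [mul_pow]; ring
    _ = ((n:ℝ) * q) ^ k * Real.exp (2 * L) := by rw [hexpL]
    _ ≤ 81 * (Nat.factorial (k + 1) : ℝ) := key

/-- Binomial-type union tail bound for the count of coordinates equal to `i`. -/
lemma aux_count_tail (p : PMF ℕ) (n : ℕ) (i m : ℕ) :
    sampleMeasure p n {x | m ≤ (Finset.univ.filter fun j => x j = i).card} ≤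
      (n.choose m : ℝ≥0∞) * (p i) ^ m := by
  classical
  have hsub : {x : Fin n → ℕ | m ≤ (Finset.univ.filter fun j => x j = i).card} ⊆
      ⋃ S ∈ Finset.powersetCard m (Finset.univ : Finset (Fin n)),
        {x : Fin n → ℕ | ∀ j ∈ S, x j = i} := by
    intro x hx
    obtain ⟨S, hS, hcard⟩ := Finset.exists_subset_card_eq hx
    refine Set.mem_iUnion₂.mpr ⟨S, Finset.mem_powersetCard.mpr ⟨Finset.subset_univ _, hcard⟩, ?_⟩
    intro j hj
    exact (Finset.mem_filter.mp (hS hj)).2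
  refine (measure_mono hsub).trans ((measure_biUnion_finset_le _ _).trans ?_)
  have heach : ∀ S ∈ Finset.powersetCard m (Finset.univ : Finset (Fin n)),
      sampleMeasure p n {x : Fin n → ℕ | ∀ j ∈ S, x j = i} = (p i) ^ m := by
    intro S hS
    have hScard : S.card = m := (Finset.mem_powersetCard.mp hS).2
    have hset : {x : Fin n → ℕ | ∀ j ∈ S, x j = i} =
        Set.univ.pi (fun j => if j ∈ S then ({i} : Set ℕ) else Set.univ) := by
      ext x
      simp only [Set.mem_setOf_eq, Set.mem_pi, Set.mem_univ, forall_true_left]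
      constructor
      · intro h j
        by_cases hj : j ∈ S
        · simp [hj, h j hj]
        · simp [hj]
      · intro h j hj
        have := h j
        rw [if_pos hj] at this
        exact this
    rw [hset, sampleMeasure, Measure.pi_pi]
    calc ∏ j : Fin n, p.toMeasure (if j ∈ S then ({i} : Set ℕ) else Set.univ)
        = ∏ j : Fin n, (if j ∈ S then p i else 1) := by
          apply Finset.prod_congr rfl
          intro j _
          by_cases hj : j ∈ S
          · simp [hj, PMF.toMeasure_apply_singleton p i (measurableSet_singleton i)]
          · simp [hj]
      _ = ∏ j ∈ Finset.univ ∩ S, p i := Finset.prod_ite_mem _ _ _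
      _ = (p i) ^ m := by
          rw [Finset.univ_inter, Finset.prod_const, hScard]
  apply le_of_eq
  calc ∑ S ∈ Finset.powersetCard m (Finset.univ : Finset (Fin n)),
        sampleMeasure p n {x : Fin n → ℕ | ∀ j ∈ S, x j = i}
      = ∑ S ∈ Finset.powersetCard m (Finset.univ : Finset (Fin n)), (p i) ^ m :=
        Finset.sum_congr rfl heach
    _ = ((Finset.powersetCard m (Finset.univ : Finset (Fin n))).card : ℝ≥0∞) * (p i) ^ m := by
        rw [Finset.sum_const, nsmul_eq_mul]
    _ = (n.choose m : ℝ≥0∞) * (p i) ^ m := by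
        rw [Finset.card_powersetCard, Finset.card_univ, Fintype.card_fin]

/-- Per-index bound. -/
lemma aux_Ai (p : PMF ℕ) (n : ℕ) (hn : 10 ≤ n) (i : ℕ) :
    sampleMeasure p n {x | (p i).toReal < 1 / (n:ℝ) ∧
        ⌈Real.log n + n * (p i).toReal⌉₊ ≤ (Finset.univ.filter fun j => x j = i).card} ≤
      ENNReal.ofReal (81 / n) * p i := by
  by_cases hi : (p i).toReal < 1 / (n:ℝ)
  · have hsub : {x : Fin n → ℕ | (p i).toReal < 1 / (n:ℝ) ∧
        ⌈Real.log n + n * (p i).toReal⌉₊ ≤ (Finset.univ.filter fun j => x j = i).card} ⊆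
        {x : Fin n → ℕ |
          ⌈Real.log n + n * (p i).toReal⌉₊ ≤ (Finset.univ.filter fun j => x j = i).card} :=
      fun x hx => hx.2
    refine ((measure_mono hsub).trans
      (aux_count_tail p n i ⌈Real.log n + n * (p i).toReal⌉₊)).trans ?_
    set m := ⌈Real.log n + n * (p i).toReal⌉₊ with hm
    set q := (p i).toReal with hq
    have hq0 : 0 ≤ q := ENNReal.toReal_nonneg
    have hqp : p i = ENNReal.ofReal q := (ENNReal.ofReal_toReal (PMF.apply_ne_top p i)).symm
    calc (n.choose m : ℝ≥0∞) * (p i) ^ m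
        = ENNReal.ofReal ((n.choose m : ℝ) * q ^ m) := by
          rw [hqp, ← ENNReal.ofReal_pow hq0,
            ENNReal.ofReal_mul (by positivity : (0:ℝ) ≤ (n.choose m : ℝ)),
            ENNReal.ofReal_natCast]
      _ ≤ ENNReal.ofReal (81 / n * q) :=
          ENNReal.ofReal_le_ofReal (aux_core n hn q hq0 hi)
      _ = ENNReal.ofReal (81 / n) * p i := by
          rw [ENNReal.ofReal_mul (by positivity : (0:ℝ) ≤ 81 / (n:ℝ)), hqp]
  · have hempty : {x : Fin n → ℕ | (p i).toReal < 1 / (n:ℝ) ∧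
        ⌈Real.log n + n * (p i).toReal⌉₊ ≤ (Finset.univ.filter fun j => x j = i).card} = ∅ := by
      ext x
      simp only [Set.mem_setOf_eq, Set.mem_empty_iff_false, iff_false]
      exact fun h => hi h.1
    rw [hempty]
    simp

theorem stmt_13 (p : PMF ℕ) (n : ℕ) (hn : 10 ≤ n) :
    sampleMeasure p n {x |
        Real.log n / n ≤
          ⨆ i : {i : ℕ // (p i).toReal < 1 / n}, (mle n x i - (p (i : ℕ)).toReal)} ≤
      ENNReal.ofReal (81 / n) := by
  classical
  have hn0 : (0:ℝ) < n := by
    have : (10:ℝ) ≤ n := by exact_mod_cast hn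
    linarith
  have hL0 : 0 < Real.log n := by
    apply Real.log_pos
    have : (10:ℝ) ≤ n := by exact_mod_cast hn
    linarith
  -- inclusion into the union of per-index events
  have hincl : {x : Fin n → ℕ |
        Real.log n / n ≤
          ⨆ i : {i : ℕ // (p i).toReal < 1 / n}, (mle n x i - (p (i : ℕ)).toReal)} ⊆
      ⋃ i : ℕ, {x : Fin n → ℕ | (p i).toReal < 1 / (n:ℝ) ∧
        ⌈Real.log n + n * (p i).toReal⌉₊ ≤ (Finset.univ.filter fun j => x j = i).card} := by
    intro x hx
    rw [Set.mem_setOf_eq] at hx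
    by_contra hx2
    simp only [Set.mem_iUnion, not_exists, Set.mem_setOf_eq, not_and, not_le] at hx2
    have hne : (Finset.univ : Finset (Fin n)).Nonempty :=
      ⟨⟨0, by omega⟩, Finset.mem_univ _⟩
    have hT : (Finset.image x Finset.univ).Nonempty := hne.image x
    have hB0 : (0:ℝ) ≤ max 0 ((Finset.image x Finset.univ).sup' hT
        (fun i => ((⌈Real.log n + n * (p i).toReal⌉₊ : ℝ) - 1) / n - (p i).toReal)) :=
      le_max_left _ _
    have hub : ∀ i : {i : ℕ // (p i).toReal < 1 / (n:ℝ)},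
        mle n x i - (p (i : ℕ)).toReal ≤ max 0 ((Finset.image x Finset.univ).sup' hT
          (fun i => ((⌈Real.log n + n * (p i).toReal⌉₊ : ℝ) - 1) / n - (p i).toReal)) := by
      rintro ⟨i, hi⟩
      by_cases hiT : i ∈ Finset.image x Finset.univ
      · have hcount : (Finset.univ.filter fun j => x j = i).card <
            ⌈Real.log n + n * (p i).toReal⌉₊ := hx2 i hi
        have h1 : ((Finset.univ.filter fun j => x j = i).card : ℝ) ≤
            (⌈Real.log n + n * (p i).toReal⌉₊ : ℝ) - 1 := by
          have h2 : ((Finset.univ.filter fun j => x j = i).card + 1 : ℝ) ≤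
              (⌈Real.log n + n * (p i).toReal⌉₊ : ℝ) := by
            exact_mod_cast Nat.succ_le_of_lt hcount
          linarith
        have h2 : mle n x i - (p i).toReal ≤
            ((⌈Real.log n + n * (p i).toReal⌉₊ : ℝ) - 1) / n - (p i).toReal := by
          have h3 : mle n x i ≤ ((⌈Real.log n + n * (p i).toReal⌉₊ : ℝ) - 1) / n :=
            (div_le_div_iff_of_pos_right hn0).mpr h1
          linarith
        exact h2.trans ((Finset.le_sup'
          (fun i => ((⌈Real.log n + n * (p i).toReal⌉₊ : ℝ) - 1) / n - (p i).toReal) hiT).trans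
          (le_max_right _ _))
      · have hzero : (Finset.univ.filter fun j => x j = i).card = 0 := by
          rw [Finset.card_eq_zero, Finset.filter_eq_empty_iff]
          intro j _ hji
          exact hiT (Finset.mem_image.mpr ⟨j, Finset.mem_univ j, hji⟩)
        have hmle : mle n x i = 0 := by simp [mle, hzero]
        rw [hmle]
        have : (0:ℝ) ≤ (p i).toReal := ENNReal.toReal_nonneg
        linarith
    have hsup := Real.iSup_le hub hB0
    have hBlt : max 0 ((Finset.image x Finset.univ).sup' hT
        (fun i => ((⌈Real.log n + n * (p i).toReal⌉₊ : ℝ) - 1) / n - (p i).toReal)) <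
        Real.log n / n := by
      apply max_lt (by positivity)
      rw [Finset.sup'_lt_iff]
      intro i _
      have hy0 : (0:ℝ) ≤ Real.log n + n * (p i).toReal := by
        have h5 : (0:ℝ) ≤ (n:ℝ) * (p i).toReal := by positivity
        linarith
      have hceil : (⌈Real.log n + n * (p i).toReal⌉₊ : ℝ) <
          Real.log n + n * (p i).toReal + 1 := Nat.ceil_lt_add_one hy0
      have hstep : ((⌈Real.log n + n * (p i).toReal⌉₊ : ℝ) - 1) / n <
          (Real.log n + n * (p i).toReal) / n :=
        (div_lt_div_iff_of_pos_right hn0).mpr (by linarith)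
      have hexp : (Real.log n + n * (p i).toReal) / n = Real.log n / n + (p i).toReal := by
        field_simp
      linarith
    linarith
  refine (measure_mono hincl).trans ?_
  refine (measure_iUnion_le _).trans ?_
  calc ∑' i : ℕ, sampleMeasure p n {x : Fin n → ℕ | (p i).toReal < 1 / (n:ℝ) ∧
        ⌈Real.log n + n * (p i).toReal⌉₊ ≤ (Finset.univ.filter fun j => x j = i).card}
      ≤ ∑' i : ℕ, ENNReal.ofReal (81 / n) * p i :=
        ENNReal.tsum_le_tsum fun i => aux_Ai p n hn i
    _ = ENNReal.ofReal (81 / n) * ∑' i : ℕ, p i := ENNReal.tsum_mul_left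
    _ = ENNReal.ofReal (81 / n) := by rw [PMF.tsum_coe, mul_one]
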